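/- (Lemma 1, uniform convergence of the GMM objective.) Let Θ be a compact metric space, (Y, 𝒴) a measurable space, and f : Y × Θ → ℝ^ℓ such that f(y, ·) is continuous on Θ for every y ∈ Y, f(·, θ) is measurable for every θ ∈ Θ, and for a probability measure ν on Y, ∫ sup_{θ ∈ Θ} ‖f(y, θ)‖ dν(y) < ∞. Let y_1, y_2, … be an i.i.d. sequence with common law ν on a probability space (Ω, F, P), and set f_n(θ) = (1/n) Σ_{i=1}^n f(y_i, θ) and f_0(θ) = ∫ f(y, θ) dν(y). Let A_n be a sequence of random ℓ × ℓ positive semidefinite matrices converging in probability to a (deterministic) positive semidefinite matrix A. Define Q_n(θ) = f_n(θ)^T A_n f_n(θ) and Q_0(θ) = f_0(θ)^T A f_0(θ). Then sup_{θ ∈ Θ} |Q_n(θ) − Q_0(θ)| → 0 in probability. -/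

import Mathlib

open MeasureTheory Filter Topology

lemma coord_abs_le_norm {ℓ : ℕ} (x : EuclideanSpace ℝ (Fin ℓ)) (i : Fin ℓ) : |x i| ≤ ‖x‖ := by
  have h1 : |x i| = Real.sqrt (|x i|^2) := by rw [Real.sqrt_sq_eq_abs, abs_abs]
  rw [h1, EuclideanSpace.norm_eq x]
  apply Real.sqrt_le_sqrt
  rw [sq_abs]
  have := Finset.single_le_sum (f := fun j => ‖x j‖ ^ 2) (fun j _ => sq_nonneg _) (Finset.mem_univ i)
  simpa [Real.norm_eq_abs, sq_abs] using this
lemma le_ciSup_dense {X : Type*} [MetricSpace X] {u : ℕ → X} (hu : DenseRange u)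
    {F : X → ℝ} (hF : Continuous F) {C : ℝ} (hC : ∀ n, F (u n) ≤ C) (x : X) :
    F x ≤ ⨆ n, F (u n) := by
  have hbdd : BddAbove (Set.range fun n => F (u n)) := ⟨C, by rintro y ⟨n, rfl⟩; exact hC n⟩
  obtain ⟨v, hv_mem, hv_lim⟩ := mem_closure_iff_seq_limit.1 (hu x)
  have : Tendsto (fun k => F (v k)) atTop (𝓝 (F x)) :=
    (hF.continuousAt).tendsto.comp hv_lim
  refine le_of_tendsto this (Eventually.of_forall fun k => ?_)
  obtain ⟨n, hn⟩ := hv_mem k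
  rw [← hn]
  exact le_ciSup hbdd n

lemma slln_of_map {Y : Type*} [MeasurableSpace Y] (ν : Measure Y)
    {Ω : Type*} [MeasurableSpace Ω] (P : Measure Ω) [IsProbabilityMeasure P]
    (ys : ℕ → Ω → Y) (hys : ∀ i, Measurable (ys i))
    (hiid : ProbabilityTheory.iIndepFun ys P)
    (hlaw : ∀ i, Measure.map (ys i) P = ν)
    {E : Type*} [NormedAddCommGroup E] [NormedSpace ℝ E] [MeasurableSpace E]
    [BorelSpace E] [CompleteSpace E]
    (h : Y → E) (hm : Measurable h) (hi : Integrable h ν) :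
    ∀ᵐ ω ∂P, Tendsto (fun n : ℕ => (n:ℝ)⁻¹ • ∑ m ∈ Finset.range n, h (ys m ω))
      atTop (𝓝 (∫ y, h y ∂ν)) := by
  set X : ℕ → Ω → E := fun i ω => h (ys i ω) with hX
  have hi0 : Integrable h (Measure.map (ys 0) P) := by rw [hlaw 0]; exact hi
  have hint : Integrable (X 0) P :=
    (integrable_map_measure hi0.aestronglyMeasurable (hys 0).aemeasurable).mp hi0
  have hindep : Pairwise (Function.onFun (ProbabilityTheory.IndepFun · · P) X) := by
    intro i j hij
    exact (hiid.indepFun hij).comp hm hm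
  have hident : ∀ i, ProbabilityTheory.IdentDistrib (X i) (X 0) P P := by
    intro i
    have : ProbabilityTheory.IdentDistrib (ys i) (ys 0) P P :=
      ⟨(hys i).aemeasurable, (hys 0).aemeasurable, by rw [hlaw i, hlaw 0]⟩
    exact this.comp hm
  have := ProbabilityTheory.strong_law_ae X hint hindep hident
  have hEeq : (∫ ω, X 0 ω ∂P) = ∫ y, h y ∂ν := by
    rw [← hlaw 0, integral_map (hys 0).aemeasurable hi0.aestronglyMeasurable]
  rw [hEeq] at this
  exact this
/-- Construction of the envelope function `w` : measurable version of
`sup_{θ ∈ closedBall θ0 r} ‖f y θ - f y θ0‖`. -/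
lemma envelope_exists
    {Θ : Type*} [MetricSpace Θ] [CompactSpace Θ]
    {Y : Type*} [MeasurableSpace Y]
    {ℓ : ℕ} (f : Y → Θ → EuclideanSpace ℝ (Fin ℓ))
    (hfc : ∀ y, Continuous (f y))
    (hfm : ∀ θ, Measurable fun y => f y θ)
    (S : Y → ℝ) (hSle : ∀ y θ, ‖f y θ‖ ≤ S y)
    (θ0 : Θ) (r : ℝ) (hr : 0 < r) :
    ∃ w : Y → ℝ, Measurable w ∧ (∀ y, 0 ≤ w y) ∧ (∀ y, w y ≤ 2 * S y) ∧
      (∀ y θ, θ ∈ Metric.closedBall θ0 r → ‖f y θ - f y θ0‖ ≤ w y) ∧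
      (∀ y (η : ℝ), (∀ θ ∈ Metric.closedBall θ0 r, ‖f y θ - f y θ0‖ ≤ η) → w y ≤ η) := by
  haveI : Nonempty ↥(Metric.closedBall θ0 r) :=
    ⟨⟨θ0, Metric.mem_closedBall_self hr.le⟩⟩
  set d : ℕ → ↥(Metric.closedBall θ0 r) := TopologicalSpace.denseSeq _ with hd
  have hdd : DenseRange d := TopologicalSpace.denseRange_denseSeq _
  refine ⟨fun y => ⨆ m, ‖f y (d m : Θ) - f y θ0‖, ?_, ?_, ?_, ?_, ?_⟩
  · exact Measurable.iSup fun m => ((hfm _).sub (hfm θ0)).norm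
  · intro y
    have hbdd : BddAbove (Set.range fun m => ‖f y (d m : Θ) - f y θ0‖) := by
      refine ⟨2 * S y, ?_⟩
      rintro x ⟨m, rfl⟩
      calc ‖f y (d m : Θ) - f y θ0‖ ≤ ‖f y (d m : Θ)‖ + ‖f y θ0‖ := norm_sub_le _ _
        _ ≤ S y + S y := add_le_add (hSle y _) (hSle y _)
        _ = 2 * S y := by ring
    exact (norm_nonneg _).trans (le_ciSup hbdd 0)
  · intro y
    refine ciSup_le fun m => ?_
    calc ‖f y (d m : Θ) - f y θ0‖ ≤ ‖f y (d m : Θ)‖ + ‖f y θ0‖ := norm_sub_le _ _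
      _ ≤ S y + S y := add_le_add (hSle y _) (hSle y _)
      _ = 2 * S y := by ring
  · intro y θ hθ
    exact le_ciSup_dense hdd
      (F := fun t : ↥(Metric.closedBall θ0 r) => ‖f y (t : Θ) - f y θ0‖)
      ((((hfc y).comp continuous_subtype_val).sub continuous_const).norm)
      (C := 2 * S y)
      (fun m => by
        calc ‖f y (d m : Θ) - f y θ0‖ ≤ ‖f y (d m : Θ)‖ + ‖f y θ0‖ := norm_sub_le _ _
          _ ≤ S y + S y := add_le_add (hSle y _) (hSle y _)
          _ = 2 * S y := by ring)
      ⟨θ, hθ⟩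
  · intro y η hη
    exact ciSup_le fun m => hη (d m : Θ) (d m).2
lemma uniform_slln
    {Θ : Type*} [MetricSpace Θ] [CompactSpace Θ] [Nonempty Θ]
    {Y : Type*} [MeasurableSpace Y]
    {ℓ : ℕ} (f : Y → Θ → EuclideanSpace ℝ (Fin ℓ))
    (hfc : ∀ y, Continuous (f y))
    (hfm : ∀ θ, Measurable fun y => f y θ)
    (ν : Measure Y) [IsProbabilityMeasure ν]
    (hint : Integrable (fun y => ⨆ θ : Θ, ‖f y θ‖) ν)
    {Ω : Type*} [MeasurableSpace Ω] (P : Measure Ω) [IsProbabilityMeasure P]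
    (ys : ℕ → Ω → Y) (hys : ∀ i, Measurable (ys i))
    (hiid : ProbabilityTheory.iIndepFun ys P)
    (hlaw : ∀ i, Measure.map (ys i) P = ν) :
    ∀ᵐ ω ∂P, Tendsto (fun n : ℕ =>
        ⨆ θ : Θ, ‖((n:ℝ)⁻¹ • ∑ m ∈ Finset.range n, f (ys m ω) θ) - ∫ y, f y θ ∂ν‖)
      atTop (𝓝 0) := by
  classical
  set S : Y → ℝ := fun y => ⨆ θ : Θ, ‖f y θ‖ with hSdef
  have hbddS : ∀ y, BddAbove (Set.range fun θ : Θ => ‖f y θ‖) :=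
    fun y => (isCompact_range (hfc y).norm).bddAbove
  have hSle : ∀ y θ, ‖f y θ‖ ≤ S y := fun y θ => le_ciSup (hbddS y) θ
  have hfint : ∀ θ, Integrable (fun y => f y θ) ν := fun θ =>
    hint.mono' (hfm θ).aestronglyMeasurable (Eventually.of_forall fun y => hSle y θ)
  -- the envelopes
  have key : ∀ (θ0 : Θ) (k : ℕ), ∃ w : Y → ℝ, Measurable w ∧ (∀ y, 0 ≤ w y) ∧
      (∀ y, w y ≤ 2 * S y) ∧
      (∀ y θ, θ ∈ Metric.closedBall θ0 ((k:ℝ)+1)⁻¹ → ‖f y θ - f y θ0‖ ≤ w y) ∧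
      (∀ y (η : ℝ), (∀ θ ∈ Metric.closedBall θ0 ((k:ℝ)+1)⁻¹, ‖f y θ - f y θ0‖ ≤ η) → w y ≤ η) :=
    fun θ0 k => envelope_exists f hfc hfm S hSle θ0 _ (by positivity)
  choose w hwmeas hwnonneg hwle hwdom hwmin using key
  have hwint : ∀ θ0 k, Integrable (w θ0 k) ν := by
    intro θ0 k
    refine (hint.const_mul 2).mono' (hwmeas θ0 k).aestronglyMeasurable
      (Eventually.of_forall fun y => ?_)
    rw [Real.norm_eq_abs, abs_of_nonneg (hwnonneg θ0 k y)]
    exact hwle θ0 k y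
  -- pointwise convergence of envelopes to 0 as the radius shrinks
  have hwpt : ∀ θ0 y, Tendsto (fun k => w θ0 k y) atTop (𝓝 0) := by
    intro θ0 y
    rw [NormedAddCommGroup.tendsto_nhds_zero]
    intro ε hε
    obtain ⟨δ, hδpos, hδ⟩ := Metric.continuousAt_iff.1 ((hfc y).continuousAt (x := θ0)) (ε/2)
      (by positivity)
    obtain ⟨k0, hk0⟩ := exists_nat_one_div_lt (K := ℝ) hδpos
    rw [eventually_atTop]
    refine ⟨k0, fun k hk => ?_⟩
    have hlt : ((k:ℝ)+1)⁻¹ < δ := by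
      calc ((k:ℝ)+1)⁻¹ ≤ ((k0:ℝ)+1)⁻¹ := by
            apply inv_anti₀ (by positivity)
            exact_mod_cast by exact_mod_cast add_le_add_left (Nat.cast_le.2 hk) 1
        _ < δ := by rw [← one_div]; exact hk0
    have hb : w θ0 k y ≤ ε/2 := by
      apply hwmin θ0 k y (ε/2)
      intro θ hθ
      have : dist θ θ0 < δ := lt_of_le_of_lt (Metric.mem_closedBall.1 hθ) hlt
      have := hδ this
      rw [dist_eq_norm] at this
      exact this.le
    rw [Real.norm_eq_abs, abs_of_nonneg (hwnonneg θ0 k y)]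
    linarith
  -- integrals of envelopes tend to 0
  have hwtend : ∀ θ0 : Θ, Tendsto (fun k => ∫ y, w θ0 k y ∂ν) atTop (𝓝 0) := by
    intro θ0
    have := tendsto_integral_of_dominated_convergence (μ := ν)
      (F := fun k y => w θ0 k y) (f := fun _ => (0:ℝ)) (bound := fun y => 2 * S y)
      (fun k => (hwmeas θ0 k).aestronglyMeasurable)
      (hint.const_mul 2)
      (fun k => Eventually.of_forall fun y => by
        rw [Real.norm_eq_abs, abs_of_nonneg (hwnonneg θ0 k y)]; exact hwle θ0 k y)
      (Eventually.of_forall fun y => hwpt θ0 y)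
    simpa using this

  -- continuity of θ ↦ ∫ f y θ
  have hG0cont : Continuous (fun θ : Θ => ∫ y, f y θ ∂ν) := by
    apply continuous_of_dominated (bound := S)
      (fun θ => (hfm θ).aestronglyMeasurable)
      (fun θ => Eventually.of_forall fun y => hSle y θ) hint
      (Eventually.of_forall fun y => hfc y)
  -- main claim
  have claim : ∀ ε > (0:ℝ), ∀ᵐ ω ∂P, ∀ᶠ n : ℕ in atTop,
      (⨆ θ : Θ, ‖((n:ℝ)⁻¹ • ∑ m ∈ Finset.range n, f (ys m ω) θ) - ∫ y, f y θ ∂ν‖) < ε := by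
    intro ε hε
    -- pick radii
    have hk : ∀ θ0 : Θ, ∃ k : ℕ, ∫ y, w θ0 k y ∂ν < ε/4 :=
      fun θ0 => ((hwtend θ0).eventually_lt_const (by positivity)).exists
    choose k hkε using hk
    -- finite subcover
    obtain ⟨t, ht⟩ := isCompact_univ.elim_finite_subcover
      (fun θ0 : Θ => Metric.ball θ0 ((k θ0 : ℝ)+1)⁻¹)
      (fun θ0 => Metric.isOpen_ball)
      (fun θ _ => Set.mem_iUnion.2 ⟨θ, Metric.mem_ball_self (by positivity)⟩)
    -- almost-sure events
    have hae : ∀ᵐ ω ∂P, ∀ θ0 ∈ t,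
        (Tendsto (fun n : ℕ => (n:ℝ)⁻¹ • ∑ m ∈ Finset.range n, f (ys m ω) θ0)
          atTop (𝓝 (∫ y, f y θ0 ∂ν))) ∧
        (Tendsto (fun n : ℕ => (n:ℝ)⁻¹ • ∑ m ∈ Finset.range n, w θ0 (k θ0) (ys m ω))
          atTop (𝓝 (∫ y, w θ0 (k θ0) y ∂ν))) := by
      refine (ae_ball_iff t.countable_toSet).2 fun θ0 _ => ?_
      exact (slln_of_map ν P ys hys hiid hlaw (fun y => f y θ0) (hfm θ0) (hfint θ0)).and
        (slln_of_map ν P ys hys hiid hlaw (w θ0 (k θ0)) (hwmeas _ _) (hwint _ _))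
    filter_upwards [hae] with ω hω
    have hev : ∀ᶠ n : ℕ in atTop, ∀ θ0 ∈ t,
        ‖((n:ℝ)⁻¹ • ∑ m ∈ Finset.range n, f (ys m ω) θ0) - ∫ y, f y θ0 ∂ν‖ < ε/4 ∧
        ((n:ℝ)⁻¹ • ∑ m ∈ Finset.range n, w θ0 (k θ0) (ys m ω)) < ε/4 := by
      rw [eventually_all_finset]
      intro θ0 hθ0
      have h1 : Tendsto (fun n : ℕ =>
          ‖((n:ℝ)⁻¹ • ∑ m ∈ Finset.range n, f (ys m ω) θ0) - ∫ y, f y θ0 ∂ν‖)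
          atTop (𝓝 0) := by
        have h0 : Tendsto (fun n : ℕ =>
            ((n:ℝ)⁻¹ • ∑ m ∈ Finset.range n, f (ys m ω) θ0) - ∫ y, f y θ0 ∂ν)
            atTop (𝓝 ((∫ y, f y θ0 ∂ν) - ∫ y, f y θ0 ∂ν)) :=
          (hω θ0 hθ0).1.sub tendsto_const_nhds
        rw [sub_self] at h0
        simpa using h0.norm
      exact (h1.eventually_lt_const (by positivity)).and
        ((hω θ0 hθ0).2.eventually_lt_const (hkε θ0))
    filter_upwards [hev] with n hn
    have hbound : ∀ θ : Θ,
        ‖((n:ℝ)⁻¹ • ∑ m ∈ Finset.range n, f (ys m ω) θ) - ∫ y, f y θ ∂ν‖ ≤ 3*(ε/4) := by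
      intro θ
      obtain ⟨θ0, hθ0t, hθb⟩ := Set.mem_iUnion₂.1 (ht (Set.mem_univ θ))
      have hθcb : θ ∈ Metric.closedBall θ0 ((k θ0 : ℝ)+1)⁻¹ := Metric.ball_subset_closedBall hθb
      set G : Θ → EuclideanSpace ℝ (Fin ℓ) :=
        fun θ' => (n:ℝ)⁻¹ • ∑ m ∈ Finset.range n, f (ys m ω) θ' with hG
      set G0 : Θ → EuclideanSpace ℝ (Fin ℓ) := fun θ' => ∫ y, f y θ' ∂ν with hG0
      have tri : ‖G θ - G0 θ‖ ≤ ‖G θ - G θ0‖ + ‖G θ0 - G0 θ0‖ + ‖G0 θ0 - G0 θ‖ := by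
        have : G θ - G0 θ = (G θ - G θ0) + (G θ0 - G0 θ0) + (G0 θ0 - G0 θ) := by abel
        rw [this]
        exact (norm_add_le _ _).trans (add_le_add_left (norm_add_le _ _) _)
      have h1 : ‖G θ - G θ0‖ < ε/4 := by
        have heq : G θ - G θ0 = (n:ℝ)⁻¹ • ∑ m ∈ Finset.range n,
            (f (ys m ω) θ - f (ys m ω) θ0) := by
          rw [hG]
          simp only [← smul_sub, ← Finset.sum_sub_distrib]
        rw [heq]
        calc ‖(n:ℝ)⁻¹ • ∑ m ∈ Finset.range n, (f (ys m ω) θ - f (ys m ω) θ0)‖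
            = (n:ℝ)⁻¹ * ‖∑ m ∈ Finset.range n, (f (ys m ω) θ - f (ys m ω) θ0)‖ := by
              rw [norm_smul, Real.norm_eq_abs, abs_of_nonneg (by positivity)]
          _ ≤ (n:ℝ)⁻¹ * ∑ m ∈ Finset.range n, ‖f (ys m ω) θ - f (ys m ω) θ0‖ := by
              exact mul_le_mul_of_nonneg_left (norm_sum_le _ _) (by positivity)
          _ ≤ (n:ℝ)⁻¹ * ∑ m ∈ Finset.range n, w θ0 (k θ0) (ys m ω) := by
              refine mul_le_mul_of_nonneg_left ?_ (by positivity)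
              exact Finset.sum_le_sum fun m _ => hwdom θ0 (k θ0) (ys m ω) θ hθcb
          _ = (n:ℝ)⁻¹ • ∑ m ∈ Finset.range n, w θ0 (k θ0) (ys m ω) := by
              rw [smul_eq_mul]
          _ < ε/4 := (hn θ0 hθ0t).2
      have h2 : ‖G θ0 - G0 θ0‖ < ε/4 := (hn θ0 hθ0t).1
      have h3 : ‖G0 θ0 - G0 θ‖ < ε/4 := by
        have heq : G0 θ0 - G0 θ = ∫ y, (f y θ0 - f y θ) ∂ν :=
          (integral_sub (hfint θ0) (hfint θ)).symm
        rw [heq]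
        calc ‖∫ y, (f y θ0 - f y θ) ∂ν‖ ≤ ∫ y, ‖f y θ0 - f y θ‖ ∂ν :=
              norm_integral_le_integral_norm _
          _ ≤ ∫ y, w θ0 (k θ0) y ∂ν := by
              refine integral_mono ((hfint θ0).sub (hfint θ)).norm (hwint _ _) fun y => ?_
              rw [norm_sub_rev]
              exact hwdom θ0 (k θ0) y θ hθcb
          _ < ε/4 := hkε θ0
      linarith
    have hbddG : BddAbove (Set.range fun θ : Θ =>
        ‖((n:ℝ)⁻¹ • ∑ m ∈ Finset.range n, f (ys m ω) θ) - ∫ y, f y θ ∂ν‖) :=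
      ⟨3*(ε/4), by rintro x ⟨θ, rfl⟩; exact hbound θ⟩
    calc (⨆ θ : Θ, ‖((n:ℝ)⁻¹ • ∑ m ∈ Finset.range n, f (ys m ω) θ) - ∫ y, f y θ ∂ν‖)
        ≤ 3*(ε/4) := ciSup_le hbound
      _ < ε := by linarith
  -- conclude: a.e. tendsto
  have hcount : ∀ᵐ ω ∂P, ∀ j : ℕ, ∀ᶠ n : ℕ in atTop,
      (⨆ θ : Θ, ‖((n:ℝ)⁻¹ • ∑ m ∈ Finset.range n, f (ys m ω) θ) - ∫ y, f y θ ∂ν‖)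
        < 1/((j:ℝ)+1) := by
    rw [ae_all_iff]
    intro j
    exact claim (1/((j:ℝ)+1)) (by positivity)
  filter_upwards [hcount] with ω hω
  have hnonneg : ∀ n : ℕ, 0 ≤
      ⨆ θ : Θ, ‖((n:ℝ)⁻¹ • ∑ m ∈ Finset.range n, f (ys m ω) θ) - ∫ y, f y θ ∂ν‖ := by
    intro n
    have hcont : Continuous (fun θ : Θ =>
        ‖((n:ℝ)⁻¹ • ∑ m ∈ Finset.range n, f (ys m ω) θ) - ∫ y, f y θ ∂ν‖) := by
      apply Continuous.norm
      exact ((continuous_finset_sum (Finset.range n) fun m _ => hfc (ys m ω)).const_smul ((n:ℝ)⁻¹)).sub hG0cont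
    have hbdd := (isCompact_range hcont).bddAbove
    exact (norm_nonneg _).trans (le_ciSup hbdd (Classical.arbitrary Θ))
  rw [tendsto_order]
  constructor
  · intro a ha
    exact Eventually.of_forall fun n => lt_of_lt_of_le ha (hnonneg n)
  · intro b hb
    obtain ⟨j, hj⟩ := exists_nat_one_div_lt (K := ℝ) hb
    filter_upwards [hω j] with n hn
    calc _ < 1/((j:ℝ)+1) := hn
      _ < b := hj


lemma entry_bound (a b a0 b0 c c0 M M0 U : ℝ) (ha : |a| ≤ M) (hb : |b| ≤ M)
    (ha0 : |a0| ≤ M0) (hb0 : |b0| ≤ M0) (hda : |a - a0| ≤ U) (hdb : |b - b0| ≤ U)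
    (hM : 0 ≤ M) (hM0 : 0 ≤ M0) (hU : 0 ≤ U) :
    |a * c * b - a0 * c0 * b0| ≤ |c - c0| * M^2 + |c0| * ((M + M0) * U) := by
  have h1 : a * c * b - a0 * c0 * b0 = (c - c0) * (a * b) + c0 * (a * b - a0 * b0) := by ring
  rw [h1]
  refine (abs_add_le _ _).trans (add_le_add ?_ ?_)
  · rw [abs_mul, abs_mul]
    refine mul_le_mul_of_nonneg_left ?_ (abs_nonneg _)
    rw [sq]
    exact mul_le_mul ha hb (abs_nonneg _) hM
  · rw [abs_mul]
    refine mul_le_mul_of_nonneg_left ?_ (abs_nonneg _)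
    have h2 : a * b - a0 * b0 = a * (b - b0) + (a - a0) * b0 := by ring
    rw [h2]
    refine (abs_add_le _ _).trans ?_
    rw [abs_mul, abs_mul]
    calc |a| * |b - b0| + |a - a0| * |b0| ≤ M * U + U * M0 :=
          add_le_add (mul_le_mul ha hdb (abs_nonneg _) hM)
            (mul_le_mul hda hb0 (abs_nonneg _) hU)
      _ = (M + M0) * U := by ring

/-- Lemma 1: uniform convergence in probability of the GMM objective
`Q_n(θ) = f_n(θ)ᵀ A_n f_n(θ)` to `Q_0(θ) = f_0(θ)ᵀ A f_0(θ)`. -/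
theorem gmm_uniform_convergence
    {Θ : Type*} [MetricSpace Θ] [CompactSpace Θ]
    {Y : Type*} [MeasurableSpace Y]
    (ℓ : ℕ) (f : Y → Θ → EuclideanSpace ℝ (Fin ℓ))
    (hfc : ∀ y, Continuous (f y))
    (hfm : ∀ θ, Measurable fun y => f y θ)
    (ν : Measure Y) [IsProbabilityMeasure ν]
    (hint : Integrable (fun y => ⨆ θ : Θ, ‖f y θ‖) ν)
    {Ω : Type*} [MeasurableSpace Ω] (P : Measure Ω) [IsProbabilityMeasure P]
    (ys : ℕ → Ω → Y) (hys : ∀ i, Measurable (ys i))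
    (hiid : ProbabilityTheory.iIndepFun ys P)
    (hlaw : ∀ i, Measure.map (ys i) P = ν)
    (A : ℕ → Ω → Matrix (Fin ℓ) (Fin ℓ) ℝ) (hApsd : ∀ n ω, (A n ω).PosSemidef)
    (A0 : Matrix (Fin ℓ) (Fin ℓ) ℝ) (hA0psd : A0.PosSemidef)
    (hAconv : ∀ i j, ∀ ε > 0,
      Tendsto (fun n => P {ω | ε < |A n ω i j - A0 i j|}) atTop (𝓝 0)) :
    ∀ ε > 0,
      Tendsto (fun (n : ℕ) => P {ω | ε <
          ⨆ θ : Θ,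
            |(∑ i, ∑ j,
                ((n : ℝ)⁻¹ • ∑ m ∈ Finset.range n, f (ys m ω) θ) i * A n ω i j *
                  ((n : ℝ)⁻¹ • ∑ m ∈ Finset.range n, f (ys m ω) θ) j) -
              (∑ i, ∑ j,
                (∫ y, f y θ ∂ν) i * A0 i j * (∫ y, f y θ ∂ν) j)|})
        atTop (𝓝 0) := by
  classical
  intro ε hε
  rcases isEmpty_or_nonempty Θ with hΘ | hΘ
  · -- Θ empty : the supremum is 0 and the sets are empty
    have hempty : ∀ n : ℕ, {ω : Ω | ε <
        ⨆ θ : Θ, |(∑ i, ∑ j,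
            ((n : ℝ)⁻¹ • ∑ m ∈ Finset.range n, f (ys m ω) θ) i * A n ω i j *
              ((n : ℝ)⁻¹ • ∑ m ∈ Finset.range n, f (ys m ω) θ) j) -
          (∑ i, ∑ j, (∫ y, f y θ ∂ν) i * A0 i j * (∫ y, f y θ ∂ν) j)|} = ∅ := by
      intro n
      ext ω
      simp only [Set.mem_setOf_eq, Set.mem_empty_iff_false, iff_false, not_lt]
      rw [Real.iSup_of_isEmpty]
      exact hε.le
    simp only [hempty, measure_empty]
    exact tendsto_const_nhds
  rcases Nat.eq_zero_or_pos ℓ with hℓ | hℓ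
  · -- ℓ = 0 : everything is zero
    subst hℓ
    have hempty : ∀ n : ℕ, {ω : Ω | ε <
        ⨆ θ : Θ, |(∑ i, ∑ j,
            ((n : ℝ)⁻¹ • ∑ m ∈ Finset.range n, f (ys m ω) θ) i * A n ω i j *
              ((n : ℝ)⁻¹ • ∑ m ∈ Finset.range n, f (ys m ω) θ) j) -
          (∑ i, ∑ j, (∫ y, f y θ ∂ν) i * A0 i j * (∫ y, f y θ ∂ν) j)|} = ∅ := by
      intro n
      ext ω
      simp only [Set.mem_setOf_eq, Set.mem_empty_iff_false, iff_false, not_lt]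
      have h0 : ∀ θ : Θ, |(∑ i : Fin 0, ∑ j : Fin 0,
            ((n : ℝ)⁻¹ • ∑ m ∈ Finset.range n, f (ys m ω) θ) i * A n ω i j *
              ((n : ℝ)⁻¹ • ∑ m ∈ Finset.range n, f (ys m ω) θ) j) -
          (∑ i : Fin 0, ∑ j : Fin 0, (∫ y, f y θ ∂ν) i * A0 i j * (∫ y, f y θ ∂ν) j)|
          = 0 := by
        intro θ
        simp
      calc (⨆ θ : Θ, |(∑ i, ∑ j,
            ((n : ℝ)⁻¹ • ∑ m ∈ Finset.range n, f (ys m ω) θ) i * A n ω i j *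
              ((n : ℝ)⁻¹ • ∑ m ∈ Finset.range n, f (ys m ω) θ) j) -
          (∑ i, ∑ j, (∫ y, f y θ ∂ν) i * A0 i j * (∫ y, f y θ ∂ν) j)|)
          = ⨆ _ : Θ, (0:ℝ) := by
            congr 1
            funext θ
            exact h0 θ
        _ = 0 := ciSup_const
        _ ≤ ε := hε.le
    simp only [hempty, measure_empty]
    exact tendsto_const_nhds
  -- main case: Θ nonempty, ℓ > 0
  set S : Y → ℝ := fun y => ⨆ θ : Θ, ‖f y θ‖ with hSdef
  have hbddS : ∀ y, BddAbove (Set.range fun θ : Θ => ‖f y θ‖) :=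
    fun y => (isCompact_range (hfc y).norm).bddAbove
  have hSle : ∀ y θ, ‖f y θ‖ ≤ S y := fun y θ => le_ciSup (hbddS y) θ
  have hS0 : ∀ y, 0 ≤ S y :=
    fun y => (norm_nonneg (f y (Classical.arbitrary Θ))).trans (hSle y _)
  have hSmeas : Measurable S := by
    set u : ℕ → Θ := TopologicalSpace.denseSeq Θ with hu
    have hud : DenseRange u := TopologicalSpace.denseRange_denseSeq Θ
    have heq : S = fun y => ⨆ m, ‖f y (u m)‖ := by
      funext y
      refine le_antisymm (ciSup_le fun θ => ?_) (ciSup_le fun m => hSle y (u m))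
      exact le_ciSup_dense hud (hfc y).norm (C := S y) (fun m => hSle y (u m)) θ
    rw [heq]
    exact Measurable.iSup fun m => (hfm (u m)).norm
  have hfint : ∀ θ, Integrable (fun y => f y θ) ν := fun θ =>
    hint.mono' (hfm θ).aestronglyMeasurable (Eventually.of_forall fun y => hSle y θ)
  -- the limit quantities
  set M0 : ℝ := ∫ y, S y ∂ν with hM0def
  have hM0nn : 0 ≤ M0 := integral_nonneg hS0
  -- random quantities
  set M : ℕ → Ω → ℝ := fun n ω => (n:ℝ)⁻¹ • ∑ m ∈ Finset.range n, S (ys m ω) with hMdef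
  set U : ℕ → Ω → ℝ := fun n ω =>
    ⨆ θ : Θ, ‖((n:ℝ)⁻¹ • ∑ m ∈ Finset.range n, f (ys m ω) θ) - ∫ y, f y θ ∂ν‖ with hUdef
  set R : ℕ → Ω → ℝ := fun n ω =>
    (∑ i, ∑ j, |A0 i j|) * ((M n ω + M0) * U n ω) with hRdef
  set Δ : ℕ → Ω → ℝ := fun n ω => ∑ i, ∑ j, |A n ω i j - A0 i j| with hΔdef
  -- basic facts
  have hMnonneg : ∀ (n : ℕ) (ω : Ω), 0 ≤ M n ω := by
    intro n ω
    rw [hMdef]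
    simp only [smul_eq_mul]
    exact mul_nonneg (inv_nonneg.2 (Nat.cast_nonneg n))
      (Finset.sum_nonneg fun m _ => hS0 _)
  have hGle : ∀ (n : ℕ) (ω : Ω) (θ : Θ), ‖(n:ℝ)⁻¹ • ∑ m ∈ Finset.range n, f (ys m ω) θ‖ ≤ M n ω := by
    intro n ω θ
    rw [norm_smul, Real.norm_eq_abs, abs_of_nonneg (inv_nonneg.2 (Nat.cast_nonneg n))]
    calc (n:ℝ)⁻¹ * ‖∑ m ∈ Finset.range n, f (ys m ω) θ‖
        ≤ (n:ℝ)⁻¹ * ∑ m ∈ Finset.range n, ‖f (ys m ω) θ‖ :=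
          mul_le_mul_of_nonneg_left (norm_sum_le _ _) (inv_nonneg.2 (Nat.cast_nonneg n))
      _ ≤ (n:ℝ)⁻¹ * ∑ m ∈ Finset.range n, S (ys m ω) :=
          mul_le_mul_of_nonneg_left (Finset.sum_le_sum fun m _ => hSle _ _)
            (inv_nonneg.2 (Nat.cast_nonneg n))
      _ = M n ω := by rw [hMdef]; simp [smul_eq_mul]
  have hG0cont : Continuous (fun θ : Θ => ∫ y, f y θ ∂ν) :=
    continuous_of_dominated (fun θ => (hfm θ).aestronglyMeasurable)
      (fun θ => Eventually.of_forall fun y => hSle y θ) hint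
      (Eventually.of_forall fun y => hfc y)
  have hG0le : ∀ θ : Θ, ‖∫ y, f y θ ∂ν‖ ≤ M0 := fun θ =>
    (norm_integral_le_integral_norm _).trans
      (integral_mono (hfint θ).norm hint fun y => hSle y θ)
  have hGcont : ∀ (n : ℕ) ω, Continuous
      (fun θ : Θ => (n:ℝ)⁻¹ • ∑ m ∈ Finset.range n, f (ys m ω) θ) := fun n ω =>
    (continuous_finset_sum (Finset.range n) fun m _ => hfc (ys m ω)).const_smul ((n:ℝ)⁻¹)
  have hUbdd : ∀ (n : ℕ) (ω : Ω), BddAbove (Set.range fun θ : Θ =>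
      ‖((n:ℝ)⁻¹ • ∑ m ∈ Finset.range n, f (ys m ω) θ) - ∫ y, f y θ ∂ν‖) := fun n ω =>
    (isCompact_range ((hGcont n ω).sub hG0cont).norm).bddAbove
  have hUle : ∀ (n : ℕ) (ω : Ω) (θ : Θ),
      ‖((n:ℝ)⁻¹ • ∑ m ∈ Finset.range n, f (ys m ω) θ) - ∫ y, f y θ ∂ν‖ ≤ U n ω :=
    fun n ω θ => le_ciSup (hUbdd n ω) θ
  have hUnonneg : ∀ (n : ℕ) (ω : Ω), 0 ≤ U n ω := fun n ω =>
    (norm_nonneg _).trans (hUle n ω (Classical.arbitrary Θ))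
  have hcoordU : ∀ (n : ℕ) (ω : Ω) (θ : Θ) (i : Fin ℓ),
      |((n:ℝ)⁻¹ • ∑ m ∈ Finset.range n, f (ys m ω) θ) i - (∫ y, f y θ ∂ν) i| ≤ U n ω := by
    intro n ω θ i
    have h := coord_abs_le_norm
      (((n:ℝ)⁻¹ • ∑ m ∈ Finset.range n, f (ys m ω) θ) - ∫ y, f y θ ∂ν) i
    exact h.trans (hUle n ω θ)
  have hΔnonneg : ∀ (n : ℕ) (ω : Ω), 0 ≤ Δ n ω := fun n ω =>
    Finset.sum_nonneg fun i _ => Finset.sum_nonneg fun j _ => abs_nonneg _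
  -- the key pointwise bound
  have key : ∀ (n : ℕ) (ω : Ω),
      (⨆ θ : Θ, |(∑ i, ∑ j,
          ((n : ℝ)⁻¹ • ∑ m ∈ Finset.range n, f (ys m ω) θ) i * A n ω i j *
            ((n : ℝ)⁻¹ • ∑ m ∈ Finset.range n, f (ys m ω) θ) j) -
        (∑ i, ∑ j, (∫ y, f y θ ∂ν) i * A0 i j * (∫ y, f y θ ∂ν) j)|)
      ≤ Δ n ω * (M n ω)^2 + R n ω := by
    intro n ω
    refine ciSup_le fun θ => ?_
    calc |(∑ i, ∑ j,
          ((n : ℝ)⁻¹ • ∑ m ∈ Finset.range n, f (ys m ω) θ) i * A n ω i j *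
            ((n : ℝ)⁻¹ • ∑ m ∈ Finset.range n, f (ys m ω) θ) j) -
        (∑ i, ∑ j, (∫ y, f y θ ∂ν) i * A0 i j * (∫ y, f y θ ∂ν) j)|
        = |∑ i, ∑ j,
            (((n : ℝ)⁻¹ • ∑ m ∈ Finset.range n, f (ys m ω) θ) i * A n ω i j *
              ((n : ℝ)⁻¹ • ∑ m ∈ Finset.range n, f (ys m ω) θ) j -
             (∫ y, f y θ ∂ν) i * A0 i j * (∫ y, f y θ ∂ν) j)| := by
          rw [← Finset.sum_sub_distrib]
          congr 1
          refine Finset.sum_congr rfl fun i _ => ?_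
          rw [← Finset.sum_sub_distrib]
      _ ≤ ∑ i, ∑ j,
            |((n : ℝ)⁻¹ • ∑ m ∈ Finset.range n, f (ys m ω) θ) i * A n ω i j *
              ((n : ℝ)⁻¹ • ∑ m ∈ Finset.range n, f (ys m ω) θ) j -
             (∫ y, f y θ ∂ν) i * A0 i j * (∫ y, f y θ ∂ν) j| :=
          (Finset.abs_sum_le_sum_abs _ _).trans
            (Finset.sum_le_sum fun i _ => Finset.abs_sum_le_sum_abs _ _)
      _ ≤ ∑ i, ∑ j, (|A n ω i j - A0 i j| * (M n ω)^2 +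
            |A0 i j| * ((M n ω + M0) * U n ω)) := by
          refine Finset.sum_le_sum fun i _ => Finset.sum_le_sum fun j _ => ?_
          exact entry_bound _ _ _ _ _ _ _ _ _
            ((coord_abs_le_norm _ i).trans (hGle n ω θ))
            ((coord_abs_le_norm _ j).trans (hGle n ω θ))
            ((coord_abs_le_norm _ i).trans (hG0le θ))
            ((coord_abs_le_norm _ j).trans (hG0le θ))
            (hcoordU n ω θ i) (hcoordU n ω θ j)
            (hMnonneg n ω) hM0nn (hUnonneg n ω)
      _ = Δ n ω * (M n ω)^2 + R n ω := by
          rw [hΔdef, hRdef]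
          simp only [Finset.sum_add_distrib, ← Finset.sum_mul]
  -- almost sure convergences
  have hMconv : ∀ᵐ ω ∂P, Tendsto (fun n => M n ω) atTop (𝓝 M0) :=
    slln_of_map ν P ys hys hiid hlaw S hSmeas hint
  have hUconv : ∀ᵐ ω ∂P, Tendsto (fun n => U n ω) atTop (𝓝 0) :=
    uniform_slln f hfc hfm ν hint P ys hys hiid hlaw
  have hRconv : ∀ᵐ ω ∂P, Tendsto (fun n => R n ω) atTop (𝓝 0) := by
    filter_upwards [hMconv, hUconv] with ω h1 h2
    have h3 : Tendsto (fun n => (∑ i, ∑ j, |A0 i j|) * ((M n ω + M0) * U n ω)) atTop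
        (𝓝 ((∑ i, ∑ j, |A0 i j|) * ((M0 + M0) * 0))) :=
      tendsto_const_nhds.mul ((h1.add_const M0).mul h2)
    simpa using h3
  -- measurability
  have hMmeas : ∀ n, Measurable (M n) := by
    intro n
    have h := (Finset.measurable_sum (Finset.range n)
      (fun m _ => hSmeas.comp (hys m))).const_smul ((n:ℝ))⁻¹
    exact h
  have hGmeas : ∀ (n : ℕ) (θ : Θ), Measurable
      (fun ω => (n:ℝ)⁻¹ • ∑ m ∈ Finset.range n, f (ys m ω) θ) := fun n θ =>
    by
      have h := (Finset.measurable_sum (Finset.range n)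
        (fun m _ => (hfm θ).comp (hys m))).const_smul ((n:ℝ))⁻¹
      exact h
  have hUmeas : ∀ n, Measurable (U n) := by
    intro n
    set u : ℕ → Θ := TopologicalSpace.denseSeq Θ with hu
    have hud : DenseRange u := TopologicalSpace.denseRange_denseSeq Θ
    have heq : U n = fun ω => ⨆ m,
        ‖((n:ℝ)⁻¹ • ∑ mm ∈ Finset.range n, f (ys mm ω) (u m)) - ∫ y, f y (u m) ∂ν‖ := by
      funext ω
      refine le_antisymm (ciSup_le fun θ => ?_) (ciSup_le fun m => hUle n ω (u m))
      exact le_ciSup_dense hud (((hGcont n ω).sub hG0cont).norm)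
        (C := U n ω) (fun m => hUle n ω (u m)) θ
    rw [heq]
    exact Measurable.iSup fun m => ((hGmeas n (u m)).sub measurable_const).norm
  have hRmeas : ∀ n, Measurable (R n) := fun n =>
    measurable_const.mul (((hMmeas n).add_const M0).mul (hUmeas n))
  -- convergence in measure
  have hRtim := tendstoInMeasure_of_tendsto_ae (μ := P) (f := R) (g := fun _ => 0)
    (fun n => (hRmeas n).aestronglyMeasurable) hRconv
  have hMtim := tendstoInMeasure_of_tendsto_ae (μ := P) (f := M) (g := fun _ => M0)
    (fun n => (hMmeas n).aestronglyMeasurable) hMconv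
  -- constants
  set C : ℝ := (M0 + 1)^2 with hCdef
  have hC : 0 < C := by positivity
  set η : ℝ := ε / 2 / C with hηdef
  have hη : 0 < η := div_pos (half_pos hε) hC
  have hl0 : (0:ℝ) < (ℓ:ℝ) := Nat.cast_pos.2 hℓ
  set η' : ℝ := η / ((ℓ:ℝ) * (ℓ:ℝ)) with hη'def
  have hη'pos : 0 < η' := div_pos hη (mul_pos hl0 hl0)
  -- inclusion of events
  have incl : ∀ n : ℕ, {ω : Ω | ε <
      ⨆ θ : Θ, |(∑ i, ∑ j,
          ((n : ℝ)⁻¹ • ∑ m ∈ Finset.range n, f (ys m ω) θ) i * A n ω i j *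
            ((n : ℝ)⁻¹ • ∑ m ∈ Finset.range n, f (ys m ω) θ) j) -
        (∑ i, ∑ j, (∫ y, f y θ ∂ν) i * A0 i j * (∫ y, f y θ ∂ν) j)|} ⊆
      {ω : Ω | ε/2 ≤ dist (R n ω) 0} ∪ ({ω : Ω | 1 ≤ dist (M n ω) M0} ∪
        ⋃ p : Fin ℓ × Fin ℓ, {ω : Ω | η'/2 < |A n ω p.1 p.2 - A0 p.1 p.2|}) := by
    intro n ω hω
    simp only [Set.mem_setOf_eq] at hω
    have h1 : ε < Δ n ω * (M n ω)^2 + R n ω := lt_of_lt_of_le hω (key n ω)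
    by_cases hR : ε/2 ≤ R n ω
    · left
      simp only [Set.mem_setOf_eq, Real.dist_eq, sub_zero]
      exact hR.trans (le_abs_self _)
    · right
      push_neg at hR
      have h2 : ε/2 ≤ Δ n ω * (M n ω)^2 := by linarith
      by_cases hM1 : 1 ≤ |M n ω - M0|
      · left
        simpa [Real.dist_eq] using hM1
      · right
        push_neg at hM1
        have hMlt : M n ω ≤ M0 + 1 := by
          rcases abs_lt.1 hM1 with ⟨_, h⟩
          linarith
        have hM2 : (M n ω)^2 ≤ C := by
          rw [hCdef]
          have := hMnonneg n ω
          nlinarith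
        have h3 : ε/2 ≤ Δ n ω * C :=
          h2.trans (mul_le_mul_of_nonneg_left hM2 (hΔnonneg n ω))
        have h4 : η ≤ Δ n ω := by
          rw [hηdef, div_le_iff₀ hC]
          linarith
        by_contra hcon
        simp only [Set.mem_iUnion, Set.mem_setOf_eq, not_exists, not_lt] at hcon
        have h5 : Δ n ω ≤ (ℓ:ℝ) * (ℓ:ℝ) * (η'/2) := by
          rw [hΔdef]
          calc (∑ i, ∑ j, |A n ω i j - A0 i j|)
              ≤ ∑ (_ : Fin ℓ), ∑ (_ : Fin ℓ), η'/2 :=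
                Finset.sum_le_sum fun i _ => Finset.sum_le_sum fun j _ => hcon (i, j)
            _ = (ℓ:ℝ) * (ℓ:ℝ) * (η'/2) := by
                simp [Finset.sum_const, Finset.card_univ]
                ring
        have h6 : (ℓ:ℝ) * (ℓ:ℝ) * (η'/2) = η/2 := by
          rw [hη'def]
          field_simp
        rw [h6] at h5
        linarith
  -- upper bound tends to zero
  have t1 := tendstoInMeasure_iff_dist.1 hRtim (ε/2) (half_pos hε)
  have t2 := tendstoInMeasure_iff_dist.1 hMtim 1 one_pos
  have t3 : Tendsto (fun n => ∑ p : Fin ℓ × Fin ℓ,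
      P {ω : Ω | η'/2 < |A n ω p.1 p.2 - A0 p.1 p.2|}) atTop (𝓝 0) := by
    have := tendsto_finset_sum (Finset.univ : Finset (Fin ℓ × Fin ℓ))
      (fun p _ => hAconv p.1 p.2 (η'/2) (half_pos hη'pos))
    simpa using this
  have hupper : Tendsto (fun n => P {ω : Ω | ε/2 ≤ dist (R n ω) 0} +
      (P {ω : Ω | 1 ≤ dist (M n ω) M0} + ∑ p : Fin ℓ × Fin ℓ,
        P {ω : Ω | η'/2 < |A n ω p.1 p.2 - A0 p.1 p.2|})) atTop (𝓝 0) := by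
    have := t1.add (t2.add t3)
    simpa using this
  refine tendsto_of_tendsto_of_tendsto_of_le_of_le tendsto_const_nhds hupper
    (fun n => zero_le (a := _)) (fun n => ?_)
  calc P {ω : Ω | ε <
      ⨆ θ : Θ, |(∑ i, ∑ j,
          ((n : ℝ)⁻¹ • ∑ m ∈ Finset.range n, f (ys m ω) θ) i * A n ω i j *
            ((n : ℝ)⁻¹ • ∑ m ∈ Finset.range n, f (ys m ω) θ) j) -
        (∑ i, ∑ j, (∫ y, f y θ ∂ν) i * A0 i j * (∫ y, f y θ ∂ν) j)|}
      ≤ P ({ω : Ω | ε/2 ≤ dist (R n ω) 0} ∪ ({ω : Ω | 1 ≤ dist (M n ω) M0} ∪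
          ⋃ p : Fin ℓ × Fin ℓ, {ω : Ω | η'/2 < |A n ω p.1 p.2 - A0 p.1 p.2|})) :=
        measure_mono (incl n)
    _ ≤ P {ω : Ω | ε/2 ≤ dist (R n ω) 0} + P ({ω : Ω | 1 ≤ dist (M n ω) M0} ∪
          ⋃ p : Fin ℓ × Fin ℓ, {ω : Ω | η'/2 < |A n ω p.1 p.2 - A0 p.1 p.2|}) :=
        measure_union_le _ _
    _ ≤ P {ω : Ω | ε/2 ≤ dist (R n ω) 0} + (P {ω : Ω | 1 ≤ dist (M n ω) M0} +
          P (⋃ p : Fin ℓ × Fin ℓ, {ω : Ω | η'/2 < |A n ω p.1 p.2 - A0 p.1 p.2|})) :=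
        add_le_add_right (measure_union_le _ _) _
    _ ≤ P {ω : Ω | ε/2 ≤ dist (R n ω) 0} + (P {ω : Ω | 1 ≤ dist (M n ω) M0} +
          ∑ p : Fin ℓ × Fin ℓ, P {ω : Ω | η'/2 < |A n ω p.1 p.2 - A0 p.1 p.2|}) := by
        refine add_le_add_right (add_le_add_right ?_ _) _
        exact (measure_iUnion_le _).trans (le_of_eq (tsum_fintype _))
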